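/- Let δ, μ₂, β > 0 with β ≥ 3μ₂, and let v₂: ℝ → (0,∞) be a nonconstant C² periodic function solving v₂'' - δ²v₂ + μ₂v₂³ = 0. Then every nontrivial solution v₁ of the Hill equation v₁'' + (βv₂² - δ²)v₁ = 0 on ℝ changes sign; i.e., there is no positive solution v₁ > 0 of v₁'' + (βv₂² - δ²)v₁ = 0 on ℝ. -/

import Mathlib

open Set Filter

theorem stmt_16 (δ μ₂ β : ℝ) (hδ : 0 < δ) (hμ₂ : 0 < μ₂) (hβ : 3 * μ₂ ≤ β) (hβ0 : 0 < β)
    (v₂ : ℝ → ℝ) (hv₂ : ContDiff ℝ 2 v₂) (hpos : ∀ t, 0 < v₂ t)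
    (hper : ∃ L > (0:ℝ), Function.Periodic v₂ L)
    (hnonconst : ¬ ∃ c : ℝ, ∀ t, v₂ t = c)
    (heq : ∀ t, deriv (deriv v₂) t - δ^2 * v₂ t + μ₂ * (v₂ t)^3 = 0) :
    ¬ ∃ v₁ : ℝ → ℝ, ContDiff ℝ 2 v₁ ∧ (∀ t, 0 < v₁ t) ∧
      (∀ t, deriv (deriv v₁) t + (β * (v₂ t)^2 - δ^2) * v₁ t = 0) := by
  rintro ⟨v₁, hv₁, hv₁pos, heq₁⟩
  obtain ⟨L, hL, hperL⟩ := hper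
  have hv₂d : Differentiable ℝ v₂ := hv₂.differentiable (by norm_num)
  have hv₂2 : ContDiff ℝ ((1:ℕ)+1) v₂ := by exact_mod_cast hv₂
  have hyd : Differentiable ℝ (deriv v₂) :=
    (contDiff_succ_iff_deriv.mp hv₂2).2.2.differentiable (by norm_num)
  have hv₁d : Differentiable ℝ v₁ := hv₁.differentiable (by norm_num)
  have hv₁2 : ContDiff ℝ ((1:ℕ)+1) v₁ := by exact_mod_cast hv₁
  have hv₁'d : Differentiable ℝ (deriv v₁) :=
    (contDiff_succ_iff_deriv.mp hv₁2).2.2.differentiable (by norm_num)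
  set y := deriv v₂ with hy
  have hy' : deriv y = fun t => δ^2 * v₂ t - μ₂ * (v₂ t)^3 := by
    funext t; linear_combination heq t
  have hy'' : ∀ t, HasDerivAt (deriv y) ((δ^2 - 3*μ₂*(v₂ t)^2) * y t) t := by
    intro t
    rw [hy']
    have h1 : HasDerivAt v₂ (y t) t := (hv₂d t).hasDerivAt
    have h2 : HasDerivAt (fun s => δ^2 * v₂ s) (δ^2 * y t) t := h1.const_mul _
    have h3 : HasDerivAt (fun s => μ₂ * (v₂ s)^3)
        (μ₂ * (↑3 * (v₂ t)^(3-1) * y t)) t := (h1.pow 3).const_mul _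
    have h4 := h2.sub h3
    refine h4.congr_deriv ?_
    push_cast
    ring
  have hv₁'' : ∀ t, deriv (deriv v₁) t = (δ^2 - β * (v₂ t)^2) * v₁ t := by
    intro t; linear_combination heq₁ t
  -- there is a point where y > 0
  have hcex : ∃ c, 0 < y c := by
    by_contra h
    push_neg at h
    have hanti : Antitone v₂ := antitone_of_deriv_nonpos hv₂d h
    apply hnonconst
    refine ⟨v₂ 0, fun t => ?_⟩
    rcases le_total t 0 with ht | ht
    · obtain ⟨n, hn⟩ := Archimedean.arch (0 - t) hL
      rw [nsmul_eq_mul] at hn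
      have h1 : (0:ℝ) ≤ t + n * L := by linarith
      have h2 : v₂ (t + n * L) ≤ v₂ 0 := hanti h1
      have h3 : v₂ (t + n * L) = v₂ t := (hperL.nat_mul n) t
      have h4 : v₂ 0 ≤ v₂ t := hanti ht
      linarith
    · obtain ⟨n, hn⟩ := Archimedean.arch t hL
      rw [nsmul_eq_mul] at hn
      have h2 : v₂ (0 + n * L) ≤ v₂ t := hanti (by linarith)
      have h3 : v₂ (0 + n * L) = v₂ 0 := (hperL.nat_mul n) 0
      have h4 : v₂ t ≤ v₂ 0 := hanti ht
      linarith
  obtain ⟨c, hc⟩ := hcex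
  -- zero of y above c
  have hzb : ∃ z, c < z ∧ y z = 0 := by
    obtain ⟨z, hz, hz0⟩ := exists_deriv_eq_zero (by linarith : c < c + L)
      hv₂d.continuous.continuousOn (hperL c).symm
    exact ⟨z, hz.1, hz0⟩
  -- zero of y below c
  have hza : ∃ z, z < c ∧ y z = 0 := by
    have hE : v₂ (c - L) = v₂ c := by
      have := hperL (c - L); rw [sub_add_cancel] at this; exact this.symm
    obtain ⟨z, hz, hz0⟩ := exists_deriv_eq_zero (by linarith : c - L < c)
      hv₂d.continuous.continuousOn hE
    exact ⟨z, hz.2, hz0⟩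
  have hycont : Continuous y := hyd.continuous
  -- least zero above c
  set Sb : Set ℝ := Ici c ∩ y ⁻¹' {0} with hSb
  have hSbcl : IsClosed Sb := isClosed_Ici.inter (isClosed_singleton.preimage hycont)
  have hSbne : Sb.Nonempty := by
    obtain ⟨z, hz1, hz2⟩ := hzb; exact ⟨z, le_of_lt hz1, hz2⟩
  have hSbbd : BddBelow Sb := ⟨c, fun t ht => ht.1⟩
  set b := sInf Sb with hbdef
  have hbmem : b ∈ Sb := hSbcl.csInf_mem hSbne hSbbd
  have hyb : y b = 0 := hbmem.2
  have hcb : c < b := lt_of_le_of_ne hbmem.1 (by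
    intro h; rw [← h] at hyb; rw [hyb] at hc; exact lt_irrefl 0 hc)
  have hposb : ∀ t ∈ Ico c b, 0 < y t := by
    intro t ht
    by_contra hle
    push_neg at hle
    have h0 : (0:ℝ) ∈ Icc (y t) (y c) := ⟨hle, le_of_lt hc⟩
    obtain ⟨z, hz, hz0⟩ := intermediate_value_Icc' ht.1 hycont.continuousOn h0
    have : z ∈ Sb := ⟨hz.1, hz0⟩
    have := csInf_le hSbbd this
    have : b ≤ t := le_trans this hz.2
    exact absurd ht.2 (not_lt.mpr this)
  -- greatest zero below c
  set Sa : Set ℝ := Iic c ∩ y ⁻¹' {0} with hSa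
  have hSacl : IsClosed Sa := isClosed_Iic.inter (isClosed_singleton.preimage hycont)
  have hSane : Sa.Nonempty := by
    obtain ⟨z, hz1, hz2⟩ := hza; exact ⟨z, le_of_lt hz1, hz2⟩
  have hSabd : BddAbove Sa := ⟨c, fun t ht => ht.1⟩
  set a := sSup Sa with hadef
  have hamem : a ∈ Sa := hSacl.csSup_mem hSane hSabd
  have hya : y a = 0 := hamem.2
  have hac : a < c := lt_of_le_of_ne hamem.1 (by
    intro h; rw [h] at hya; rw [hya] at hc; exact lt_irrefl 0 hc)
  have hposa : ∀ t ∈ Ioc a c, 0 < y t := by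
    intro t ht
    by_contra hle
    push_neg at hle
    have h0 : (0:ℝ) ∈ Icc (y t) (y c) := ⟨hle, le_of_lt hc⟩
    obtain ⟨z, hz, hz0⟩ := intermediate_value_Icc ht.2 hycont.continuousOn h0
    have : z ∈ Sa := ⟨hz.2, hz0⟩
    have := le_csSup hSabd this
    have : t ≤ a := le_trans hz.1 this
    exact absurd ht.1 (not_lt.mpr this)
  have hab : a < b := lt_trans hac hcb
  have hypos : ∀ t ∈ Ioo a b, 0 < y t := by
    intro t ht
    rcases le_total t c with h | h
    · exact hposa t ⟨ht.1, h⟩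
    · exact hposb t ⟨h, ht.2⟩
  -- deriv y a ≥ 0
  have hdya : 0 ≤ deriv y a := by
    have hda : HasDerivAt y (deriv y a) a := (hyd a).hasDerivAt
    rw [hasDerivAt_iff_tendsto_slope] at hda
    have hda' : Tendsto (slope y a) (nhdsWithin a (Ioi a)) (nhds (deriv y a)) :=
      hda.mono_left (nhdsWithin_mono a (fun x hx => ne_of_gt hx))
    refine ge_of_tendsto hda' ?_
    filter_upwards [Ioo_mem_nhdsGT_of_mem (⟨le_refl a, hab⟩ : a ∈ Ico a b)] with t ht
    rw [slope_def_field]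
    have h1 : 0 < y t := hypos t ht
    have h2 : 0 < t - a := sub_pos.mpr ht.1
    rw [hya, sub_zero] at *
    positivity
  -- the Wronskian
  set W : ℝ → ℝ := fun t => deriv y t * v₁ t - y t * deriv v₁ t with hWdef
  have hW : ∀ t, HasDerivAt W ((β - 3*μ₂) * (v₂ t)^2 * y t * v₁ t) t := by
    intro t
    have h1 : HasDerivAt (deriv y) ((δ^2 - 3*μ₂*(v₂ t)^2) * y t) t := hy'' t
    have h2 : HasDerivAt v₁ (deriv v₁ t) t := (hv₁d t).hasDerivAt
    have h3 : HasDerivAt y (deriv y t) t := (hyd t).hasDerivAt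
    have h4 : HasDerivAt (deriv v₁) (deriv (deriv v₁) t) t := (hv₁'d t).hasDerivAt
    rw [hv₁'' t] at h4
    have h5 := (h1.mul h2).sub (h3.mul h4)
    refine h5.congr_deriv ?_
    ring
  have hWdiff : Differentiable ℝ W := fun t => (hW t).differentiableAt
  have hWa : 0 ≤ W a := by
    simp only [hWdef, hya, zero_mul, sub_zero]
    exact mul_nonneg hdya (le_of_lt (hv₁pos a))
  have hWmono : MonotoneOn W (Icc a b) := by
    refine monotoneOn_of_deriv_nonneg (convex_Icc a b) hWdiff.continuous.continuousOn
      (hWdiff.differentiableOn) ?_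
    intro x hx
    rw [interior_Icc] at hx
    rw [(hW x).deriv]
    have h1 : 0 < y x := hypos x hx
    have h2 : 0 < v₁ x := hv₁pos x
    have h3 : (0:ℝ) ≤ β - 3*μ₂ := by linarith
    positivity
  have hWnn : ∀ t ∈ Icc a b, 0 ≤ W t := by
    intro t ht
    exact le_trans hWa (hWmono ⟨le_refl a, le_of_lt hab⟩ ht ht.1)
  -- the quotient g = y / v₁
  set g : ℝ → ℝ := fun t => y t / v₁ t with hgdef
  have hg : ∀ t, HasDerivAt g (W t / (v₁ t)^2) t := by
    intro t
    have := ((hyd t).hasDerivAt).div ((hv₁d t).hasDerivAt) (ne_of_gt (hv₁pos t))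
    exact this
  have hgdiff : Differentiable ℝ g := fun t => (hg t).differentiableAt
  have hgmono : MonotoneOn g (Icc a b) := by
    refine monotoneOn_of_deriv_nonneg (convex_Icc a b) hgdiff.continuous.continuousOn
      (hgdiff.differentiableOn) ?_
    intro x hx
    rw [interior_Icc] at hx
    rw [(hg x).deriv]
    exact div_nonneg (hWnn x ⟨le_of_lt hx.1, le_of_lt hx.2⟩) (sq_nonneg _)
  have hgb : g b = 0 := by simp only [hgdef, hyb, zero_div]
  have hmid : (a+b)/2 ∈ Ioo a b := ⟨by linarith, by linarith⟩
  have hgmid : 0 < g ((a+b)/2) :=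
    div_pos (hypos _ hmid) (hv₁pos _)
  have hle : g ((a+b)/2) ≤ g b :=
    hgmono ⟨le_of_lt hmid.1, le_of_lt hmid.2⟩ ⟨le_of_lt hab, le_refl b⟩ (le_of_lt hmid.2)
  rw [hgb] at hle
  linarith
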